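/- Six Regions, Region 5: for all integers n, k with n ≥ 0 > k, the Roman coefficient satisfies ⌊n choose k⌉ = (-1)^k/(k·C(n-k,n)) = (-1)^k/((k-n)·C(n-k-1,n)) = ⌊n choose n-k⌉, where k and k-n are negative integers, the equalities are of rational numbers, and the pair (n, n-k) lies in the region k' > n' ≥ 0. -/

import Mathlib

def romanFactorial (n : ℤ) : ℚ :=
  if 0 ≤ n then (n.toNat.factorial : ℚ)
  else (-1 : ℚ) ^ (n + 1) / ((-n - 1).toNat.factorial : ℚ)

def romanCoeff (n k : ℤ) : ℚ :=
  romanFactorial n / (romanFactorial k * romanFactorial (n - k))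

lemma neg_one_zpow_neg_nat (q : ℕ) : ((-1:ℚ)) ^ (-(q:ℤ)) = (-1) ^ q := by
  rw [zpow_neg, zpow_natCast, ← inv_pow, inv_neg, inv_one]

theorem romanCoeff_region5 (n k : ℤ) (h1 : n ≥ 0) (h2 : 0 > k) :
    romanCoeff n k = (-1 : ℚ) ^ k / ((k : ℚ) * ((n - k).toNat.choose n.toNat : ℚ)) ∧
    romanCoeff n k =
      (-1 : ℚ) ^ k / (((k - n : ℤ) : ℚ) * ((n - k - 1).toNat.choose n.toNat : ℚ)) ∧
    romanCoeff n k = romanCoeff n (n - k) ∧ n - k > n ∧ n ≥ 0 := by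
  obtain ⟨m, rfl⟩ := Int.eq_ofNat_of_zero_le h1
  obtain ⟨j, rfl⟩ : ∃ j : ℕ, k = -((j : ℤ) + 1) := ⟨(-k - 1).toNat, by omega⟩
  have e1 : romanFactorial (m : ℤ) = m.factorial := by
    simp [romanFactorial]
  have e2 : romanFactorial (-((j : ℤ) + 1)) = (-1 : ℚ) ^ j / j.factorial := by
    have hnn : (-(-((j:ℤ)+1)) - 1).toNat = j := by omega
    rw [romanFactorial, if_neg (by omega), hnn,
      show (-((j:ℤ)+1) + 1) = -(j:ℤ) by ring, neg_one_zpow_neg_nat]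
  have ht1 : ((m : ℤ) - -((j:ℤ)+1)).toNat = m + j + 1 := by omega
  have e3 : romanFactorial ((m : ℤ) - -((j : ℤ) + 1)) = (m + j + 1).factorial := by
    rw [romanFactorial, if_pos (by omega), ht1]
  have ht2 : ((m : ℤ) - -((j:ℤ)+1) - 1).toNat = m + j := by omega
  have ht3 : ((m : ℤ)).toNat = m := by omega
  have hc1 : ((m+j+1).choose m : ℚ) * m.factorial * (j+1).factorial = (m+j+1).factorial := by
    have h := Nat.choose_mul_factorial_mul_factorial (show m ≤ m+(j+1) by omega)
    rw [Nat.add_sub_cancel_left] at h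
    rw [show m+j+1 = m+(j+1) by ring]
    exact_mod_cast congrArg (Nat.cast : ℕ → ℚ) h
  have hc2 : ((m+j).choose m : ℚ) * m.factorial * j.factorial = (m+j).factorial := by
    have h := Nat.choose_mul_factorial_mul_factorial (show m ≤ m+j by omega)
    rw [Nat.add_sub_cancel_left] at h
    exact_mod_cast congrArg (Nat.cast : ℕ → ℚ) h
  have hsgn : ((-1:ℚ)) ^ (-((j:ℤ)+1)) = (-1:ℚ)^(j+1) := by
    rw [show (-((j:ℤ)+1)) = -(((j+1:ℕ)):ℤ) by push_cast; ring, neg_one_zpow_neg_nat]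
  have hsq : ((-1:ℚ)^j) * ((-1:ℚ)^j) = 1 := by
    rw [← pow_add]; exact Even.neg_one_pow ⟨j, rfl⟩
  have hfm : (m.factorial : ℚ) ≠ 0 := Nat.cast_ne_zero.2 m.factorial_ne_zero
  have hfj : (j.factorial : ℚ) ≠ 0 := Nat.cast_ne_zero.2 j.factorial_ne_zero
  have hfmj1 : ((m+j+1).factorial : ℚ) ≠ 0 := Nat.cast_ne_zero.2 (m+j+1).factorial_ne_zero
  have hch1 : (((m+j+1).choose m : ℕ) : ℚ) ≠ 0 :=
    Nat.cast_ne_zero.2 (Nat.choose_pos (by omega)).ne'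
  have hch2 : (((m+j).choose m : ℕ) : ℚ) ≠ 0 :=
    Nat.cast_ne_zero.2 (Nat.choose_pos (by omega)).ne'
  have hfs : (((j+1).factorial : ℕ) : ℚ) = (j+1) * j.factorial := by
    exact_mod_cast congrArg (Nat.cast : ℕ → ℚ) (Nat.factorial_succ j)
  have hfs2 : (((m+j+1).factorial : ℕ) : ℚ) = (m+j+1) * (m+j).factorial := by
    exact_mod_cast congrArg (Nat.cast : ℕ → ℚ) (Nat.factorial_succ (m+j))
  have key : romanCoeff (m:ℤ) (-((j:ℤ)+1)) =
      (-1:ℚ)^j * (m.factorial * j.factorial) / (m+j+1).factorial := by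
    rw [romanCoeff, e1, e2, e3]
    field_simp
    linear_combination -hsq
  have hjm : -((j:ℚ)+1) ≠ 0 := by
    intro h0; nlinarith [Nat.cast_nonneg (α := ℚ) j]
  have hjm2 : -((j:ℚ)+1) - (m:ℚ) ≠ 0 := by
    intro h0; nlinarith [Nat.cast_nonneg (α := ℚ) j, Nat.cast_nonneg (α := ℚ) m]
  refine ⟨?_, ?_, ?_, by omega, by omega⟩
  · rw [key, ht1, ht3, hsgn]
    push_cast
    rw [div_eq_div_iff hfmj1 (mul_ne_zero hjm hch1)]
    linear_combination (-(-1:ℚ)^j) * hc1 +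
      ((-1:ℚ)^j * ((m+j+1).choose m : ℚ) * m.factorial) * hfs
  · rw [key, ht2, ht3, hsgn]
    push_cast
    rw [div_eq_div_iff hfmj1 (mul_ne_zero hjm2 hch2)]
    linear_combination (-(-1:ℚ)^j * ((m:ℚ)+j+1)) * hc2 + ((-1:ℚ)^j) * hfs2
  · rw [romanCoeff, romanCoeff, show (m:ℤ) - ((m:ℤ) - -((j:ℤ)+1)) = -((j:ℤ)+1) by ring,
        mul_comm]
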